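/- Let (T, F) be a torsion theory for R-Mod and let (T_cw, F_cw) be the induced torsion theory on representations of a quiver Q, where T_cw consists of representations X with X(v) torsion for all vertices v. Then a representation X lies in the torsion free class F_cw if and only if X(v) ∈ F for every vertex v. -/

import Mathlib

open CategoryTheory CategoryTheory.Limits

/-- A torsion theory `(T, F)` for the category of left `R`-modules. -/
structure TorsionTheory (R : Type) [Ring R] : Type 2 where
  T : ModuleCat.{0,0} R → Prop
  F : ModuleCat.{0,0} R → Prop
  hom_zero : ∀ (A B : ModuleCat.{0,0} R), T A → F B → ∀ f : A ⟶ B, f = 0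
  mem_torsion : ∀ C : ModuleCat.{0,0} R, (∀ B, F B → ∀ f : C ⟶ B, f = 0) → T C
  mem_torsionFree : ∀ C : ModuleCat.{0,0} R, (∀ A, T A → ∀ f : A ⟶ C, f = 0) → F C

/-- The category of representations of a quiver (vertex type `V`) by
left `R`-modules, realized as functors from the path category of `V`. -/
abbrev QRep (V : Type) [Quiver.{1} V] (R : Type) [Ring R] := Paths V ⥤ ModuleCat.{0,0} R

/-- For the induced componentwise torsion theory on representations
of a quiver, a representation `X` is in the torsion free class `F_cw` (i.e. every
morphism to `X` from a componentwise torsion representation is zero) if and only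
if `X(v)` is torsion free for every vertex `v`. -/
theorem stmt2 {V : Type} [Quiver.{1} V] {R : Type} [Ring R] (tt : TorsionTheory R)
    (X : QRep V R) :
    (∀ (A : QRep V R), (∀ v : V, tt.T (A.obj ((Paths.of V).obj v))) → ∀ f : A ⟶ X, f = 0) ↔
    (∀ v : V, tt.F (X.obj ((Paths.of V).obj v))) := by
  constructor
  · intro h v
    apply tt.mem_torsionFree
    intro A hA f
    -- the subrepresentation of X generated by the image of f at v
    let Sp : ∀ w : Paths V, Submodule R (X.obj w) := fun w =>
      Submodule.span R {x | ∃ (p : (Paths.of V).obj v ⟶ w) (a : A), (X.map p).hom (f.hom a) = x}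
    have hmap : ∀ {w w' : Paths V} (p : w ⟶ w'), ∀ x ∈ Sp w, (X.map p).hom x ∈ Sp w' := by
      intro w w' p x hx
      have : Sp w ≤ (Sp w').comap (X.map p).hom := by
        refine Submodule.span_le.mpr ?_
        rintro _ ⟨q, a, rfl⟩
        refine Submodule.subset_span ⟨q ≫ p, a, ?_⟩
        rw [X.map_comp]; rfl
      exact this hx
    let S : QRep V R :=
      { obj := fun w => ModuleCat.of R (Sp w)
        map := fun {w w'} p => ModuleCat.ofHom ((X.map p).hom.restrict (hmap p))
        map_id := fun w => by
          refine ModuleCat.hom_ext (LinearMap.ext (fun x => Subtype.ext ?_))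
          show (X.map (𝟙 w)).hom x.1 = x.1
          rw [X.map_id]; rfl
        map_comp := fun {w w' w''} p p' => by
          refine ModuleCat.hom_ext (LinearMap.ext (fun x => Subtype.ext ?_))
          show (X.map (p ≫ p')).hom x.1 = (X.map p').hom ((X.map p).hom x.1)
          rw [X.map_comp]; rfl }
    have hS : ∀ w : V, tt.T (S.obj ((Paths.of V).obj w)) := by
      intro w
      apply tt.mem_torsion
      intro B hB g
      refine ModuleCat.hom_ext (LinearMap.ext (fun y => ?_))
      obtain ⟨x, hx⟩ := y
      show g.hom ⟨x, hx⟩ = 0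
      induction hx using Submodule.span_induction with
      | mem x h =>
        obtain ⟨q, a, rfl⟩ := h
        let k : A →ₗ[R] Sp ((Paths.of V).obj w) :=
          LinearMap.codRestrict _ ((X.map q).hom ∘ₗ f.hom)
            (fun a => Submodule.subset_span ⟨q, a, rfl⟩)
        have := tt.hom_zero A B hA hB (ModuleCat.ofHom (g.hom ∘ₗ k))
        exact LinearMap.congr_fun (congrArg ModuleCat.Hom.hom this) a
      | zero => exact g.hom.map_zero
      | add x y hx hy ihx ihy =>
        have := g.hom.map_add ⟨x, hx⟩ ⟨y, hy⟩
        rw [ihx, ihy, add_zero] at this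
        exact this
      | smul r x hx ih =>
        have := g.hom.map_smul r ⟨x, hx⟩
        rw [ih, smul_zero] at this
        exact this
    let η : S ⟶ X :=
      { app := fun w => ModuleCat.ofHom (Sp w).subtype
        naturality := fun {w w'} p => rfl }
    have h0 := h S hS η
    have h2 : η.app ((Paths.of V).obj v) = 0 := by rw [h0]; rfl
    refine ModuleCat.hom_ext (LinearMap.ext (fun a => ?_))
    have hmem : f.hom a ∈ Sp ((Paths.of V).obj v) :=
      Submodule.subset_span ⟨𝟙 _, a, by rw [X.map_id]; rfl⟩
    have h3 : (η.app ((Paths.of V).obj v)).hom ⟨f.hom a, hmem⟩ = f.hom a := rfl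
    rw [← h3, h2]
    rfl
  · intro h A hA f
    ext w : 2
    exact tt.hom_zero _ _ (hA _) (h _) _
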